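/- Let A be a unital *-subalgebra of L(H), H finite-dimensional, and {P_i} a maximal family of nonzero pairwise orthogonal self-adjoint projectors in A summing to the identity. Define i ∼ j iff P_i A P_j ≠ 0. Then ∼ is an equivalence relation on the index set. -/

import Mathlib

open scoped BigOperators

set_option linter.unusedSectionVars false

section Helpers

variable {E : Type*} [NormedAddCommGroup E] [InnerProductSpace ℂ E] [FiniteDimensional ℂ E]

local notation "⟪" x ", " y "⟫" => @inner ℂ _ _ x y

lemma aeval_apply_eigen {T : E →ₗ[ℂ] E} {μ : ℂ} {v : E} (hv : T v = μ • v) (q : Polynomial ℂ) :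
    (Polynomial.aeval T q) v = q.eval μ • v := by
  have hpow : ∀ n : ℕ, (T ^ n) v = μ ^ n • v := by
    intro n
    induction n with
    | zero => simp
    | succ n ih =>
      rw [pow_succ, pow_succ, Module.End.mul_apply, hv, map_smul, ih, smul_smul, mul_comm]
  induction q using Polynomial.induction_on' with
  | add p q hp hq => simp [hp, hq, add_smul]
  | monomial n c =>
    simp only [Polynomial.aeval_monomial, Polynomial.eval_monomial,
      Algebra.algebraMap_eq_smul_one, smul_mul_assoc, one_mul, LinearMap.smul_apply,
      hpow, smul_smul]

lemma aeval_eq_zero_of_vanishing {T : E →ₗ[ℂ] E} (hT : T.IsSymmetric) {q : Polynomial ℂ}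
    (hq : ∀ μ : ℂ, Module.End.HasEigenvalue T μ → q.eval μ = 0) :
    Polynomial.aeval T q = 0 := by
  have htop : (⨆ μ : ℂ, Module.End.eigenspace T μ) = ⊤ :=
    Submodule.orthogonal_eq_bot_iff.mp hT.orthogonalComplement_iSup_eigenspaces_eq_bot
  ext v
  have hv : v ∈ (⨆ μ : ℂ, Module.End.eigenspace T μ) := htop ▸ Submodule.mem_top
  rw [LinearMap.zero_apply]
  refine Submodule.iSup_induction (motive := fun x => (Polynomial.aeval T q) x = 0) _ hv ?_ (by simp) ?_
  · intro μ x hx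
    rcases eq_or_ne x 0 with rfl | hx0
    · simp
    · have hμ : Module.End.HasEigenvalue T μ :=
        Module.End.hasEigenvalue_of_hasEigenvector ⟨hx, hx0⟩
      rw [aeval_apply_eigen (Module.End.mem_eigenspace_iff.mp hx), hq μ hμ, zero_smul]
  · intro x y hx hy
    rw [map_add, hx, hy, add_zero]

lemma star_aeval {T : E →ₗ[ℂ] E} (hT : star T = T) (q : Polynomial ℂ) :
    star (Polynomial.aeval T q) = Polynomial.aeval T (q.map (starRingEnd ℂ)) := by
  induction q using Polynomial.induction_on' with
  | add p q hp hq => rw [map_add, star_add, hp, hq, Polynomial.map_add, map_add]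
  | monomial n c =>
    simp only [Polynomial.map_monomial, Polynomial.aeval_monomial,
      Algebra.algebraMap_eq_smul_one, smul_mul_assoc, one_mul]
    rw [star_smul, star_pow, hT]
    rfl

/-- Spectral projection onto the nonzero part of a self-adjoint nonzero operator,
as a polynomial in the operator with zero constant term. -/
lemma specProj (T : E →ₗ[ℂ] E) (hT : star T = T) (hT0 : T ≠ 0) :
    ∃ (R S : E →ₗ[ℂ] E) (r : Polynomial ℂ),
      S = Polynomial.aeval T r ∧ R = T * S ∧ R = S * T ∧ R * R = R ∧ star R = R ∧ R ≠ 0 := by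
  have hsym : T.IsSymmetric := (LinearMap.isSymmetric_iff_isSelfAdjoint T).mpr hT
  have hint : IsIntegral ℂ T := Algebra.IsIntegral.isIntegral T
  have hmp0 : minpoly ℂ T ≠ 0 := minpoly.ne_zero hint
  set s : Finset ℂ := insert (0 : ℂ) (minpoly ℂ T).roots.toFinset with hs
  set vals : ℂ → ℂ := fun μ => if μ = 0 then 0 else 1 with hvals
  set q : Polynomial ℂ := Lagrange.interpolate s id vals with hq
  have hnode : ∀ μ : ℂ, μ ∈ s → q.eval μ = vals μ := by
    intro μ hμ
    exact Lagrange.eval_interpolate_at_node vals (Set.injOn_id _) hμ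
  have hmem : ∀ μ : ℂ, Module.End.HasEigenvalue T μ → μ ∈ s := by
    intro μ hμ
    rcases eq_or_ne μ 0 with rfl | h0
    · exact Finset.mem_insert_self _ _
    · refine Finset.mem_insert_of_mem ?_
      rw [Multiset.mem_toFinset, Polynomial.mem_roots hmp0]
      exact Module.End.hasEigenvalue_iff_isRoot.mp hμ
  have heig : ∀ μ : ℂ, Module.End.HasEigenvalue T μ → q.eval μ = vals μ :=
    fun μ hμ => hnode μ (hmem μ hμ)
  -- existence of a nonzero eigenvalue
  have hex : ∃ μ : ℂ, Module.End.HasEigenvalue T μ ∧ μ ≠ 0 := by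
    by_contra h
    push_neg at h
    apply hT0
    have := aeval_eq_zero_of_vanishing hsym (q := Polynomial.X) (fun μ hμ => by
      simpa using h μ hμ)
    simpa using this
  obtain ⟨μ0, hμ0, hμ0ne⟩ := hex
  obtain ⟨v0, hv0mem, hv0ne⟩ := hμ0.exists_hasEigenvector
  set R : E →ₗ[ℂ] E := Polynomial.aeval T q with hR
  have hidem : R * R = R := by
    have : Polynomial.aeval T (q * q - q) = 0 := by
      refine aeval_eq_zero_of_vanishing hsym ?_
      intro μ hμ
      have := heig μ hμ
      simp only [Polynomial.eval_sub, Polynomial.eval_mul, this, hvals]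
      split <;> ring
    rw [map_sub, map_mul, sub_eq_zero] at this
    exact this
  have hstar : star R = R := by
    rw [hR, star_aeval hT]
    have : Polynomial.aeval T (q.map (starRingEnd ℂ) - q) = 0 := by
      refine aeval_eq_zero_of_vanishing hsym ?_
      intro μ hμ
      have hreal : (starRingEnd ℂ) μ = μ := hsym.conj_eigenvalue_eq_self hμ
      have h1 : (q.map (starRingEnd ℂ)).eval μ = (starRingEnd ℂ) (q.eval μ) := by
        conv_lhs => rw [← hreal]
        rw [Polynomial.eval_map, Polynomial.eval₂_at_apply]
      rw [Polynomial.eval_sub, h1, heig μ hμ]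
      by_cases h0 : μ = 0 <;> simp [hvals, h0]
    rw [map_sub, sub_eq_zero] at this
    exact this
  have hR0 : R ≠ 0 := by
    intro h
    have h1 : R v0 = v0 := by
      rw [hR, aeval_apply_eigen (Module.End.mem_eigenspace_iff.mp hv0mem), heig μ0 hμ0,
        hvals]
      simp [hμ0ne]
    rw [h] at h1
    exact hv0ne (by simpa using h1.symm)
  have hroot : Polynomial.X ∣ q := by
    have h0 : q.eval 0 = 0 := by
      rw [hnode 0 (Finset.mem_insert_self _ _), hvals]; simp
    simpa using (Polynomial.dvd_iff_isRoot (p := q) (a := 0)).mpr h0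
  obtain ⟨r, hr⟩ := hroot
  refine ⟨R, Polynomial.aeval T r, r, rfl, ?_, ?_, hidem, hstar, hR0⟩
  · rw [hR, hr, map_mul, Polynomial.aeval_X]
  · rw [hR, hr, mul_comm Polynomial.X r, map_mul, Polynomial.aeval_X]

lemma star_mul_self_eq_zero' {X : E →ₗ[ℂ] E} (h : star X * X = 0) : X = 0 := by
  ext v
  rw [LinearMap.zero_apply, ← inner_self_eq_zero (𝕜 := ℂ)]
  have h1 : ⟪(star X * X) v, v⟫ = ⟪X v, X v⟫ := by
    rw [Module.End.mul_apply, LinearMap.star_eq_adjoint, LinearMap.adjoint_inner_left]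
  rw [← h1, h, LinearMap.zero_apply, inner_zero_left]

end Helpers

/-- A family of nonzero, self-adjoint, pairwise orthogonal projectors in `A`. -/
def IsOrthProjFamily {E : Type*} [NormedAddCommGroup E] [InnerProductSpace ℂ E]
    [FiniteDimensional ℂ E] (A : StarSubalgebra ℂ (E →ₗ[ℂ] E))
    {p : ℕ} (P : Fin p → (E →ₗ[ℂ] E)) : Prop :=
  (∀ i, P i ∈ A) ∧ (∀ i, P i ≠ 0) ∧ (∀ i, star (P i) = P i) ∧
    (∀ i j, P i * P j = if i = j then P i else 0)

/-- Maximality: no such family spans a strictly larger subalgebra. -/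
def IsMaximalOrthProjFamily {E : Type*} [NormedAddCommGroup E] [InnerProductSpace ℂ E]
    [FiniteDimensional ℂ E] (A : StarSubalgebra ℂ (E →ₗ[ℂ] E))
    {p : ℕ} (P : Fin p → (E →ₗ[ℂ] E)) : Prop :=
  IsOrthProjFamily A P ∧
    ∀ (m : ℕ) (Q : Fin m → (E →ₗ[ℂ] E)), IsOrthProjFamily A Q →
      ¬ Algebra.adjoin ℂ (Set.range P) < Algebra.adjoin ℂ (Set.range Q)

theorem corner_relation_equivalence
    {E : Type*} [NormedAddCommGroup E] [InnerProductSpace ℂ E] [FiniteDimensional ℂ E]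
    (A : StarSubalgebra ℂ (E →ₗ[ℂ] E)) {p : ℕ} (P : Fin p → (E →ₗ[ℂ] E))
    (hP : IsMaximalOrthProjFamily A P) (hsum : ∑ i, P i = 1) :
    Equivalence (fun i j : Fin p => ∃ M ∈ A, P i * M * P j ≠ 0) := by
  obtain ⟨⟨hmem, hne, hstar, hmul⟩, hmax⟩ := hP
  constructor
  · -- reflexivity
    intro i
    refine ⟨P i, hmem i, ?_⟩
    rw [hmul i i, if_pos rfl, hmul i i, if_pos rfl]
    exact hne i
  · -- symmetry
    rintro i j ⟨M, hM, hMne⟩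
    refine ⟨star M, star_mem hM, ?_⟩
    have h1 : P j * star M * P i = star (P i * M * P j) := by
      rw [star_mul, star_mul, hstar i, hstar j, mul_assoc]
    rw [h1]
    intro h0
    exact hMne (star_eq_zero.mp h0)
  · -- transitivity
    rintro i j k ⟨M, hM, hXne⟩ ⟨N, hN, hYne⟩
    by_cases hXY : P i * (M * (P j * N)) * P k = 0
    · exfalso
      set X := P i * M * P j with hX
      set Y := P j * N * P k with hY
      have hPjj : P j * P j = P j := by rw [hmul j j, if_pos rfl]
      have hprod : X * Y = P i * (M * (P j * N)) * P k := by
        rw [hX, hY]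
        simp only [mul_assoc]
        rw [← mul_assoc (P j) (P j), hPjj]
      set T := star X * X with hT
      have hstarX : star X = P j * (star M * P i) := by
        rw [hX, star_mul, star_mul, hstar i, hstar j]
      have hTstar : star T = T := by rw [hT, star_mul, star_star]
      have hT0 : T ≠ 0 := fun h => hXne (star_mul_self_eq_zero' h)
      have hXA : X ∈ A := mul_mem (mul_mem (hmem i) hM) (hmem j)
      have hTA : T ∈ A := mul_mem (star_mem hXA) hXA
      have hXPj : X * P j = X := by rw [hX, mul_assoc, hPjj]
      have hPjsX : P j * star X = star X := by rw [hstarX, ← mul_assoc, hPjj]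
      have hPjT : P j * T = T := by rw [hT, ← mul_assoc, hPjsX]
      have hTPj : T * P j = T := by rw [hT, mul_assoc, hXPj]
      have hPjY : P j * Y = Y := by
        rw [hY, ← mul_assoc, ← mul_assoc, hPjj]
      have hXY0 : X * Y = 0 := by rw [hprod]; exact hXY
      have hTY : T * Y = 0 := by rw [hT, mul_assoc, hXY0, mul_zero]
      obtain ⟨R, S, r, hSdef, hRTS, hRST, hRidem, hRstar, hR0⟩ := specProj T hTstar hT0
      have hSA : S ∈ A := by
        rw [hSdef]
        have h1 : Algebra.adjoin ℂ ({T} : Set (E →ₗ[ℂ] E)) ≤ A.toSubalgebra :=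
          Algebra.adjoin_le (Set.singleton_subset_iff.mpr hTA)
        have h2 : Polynomial.aeval T r ∈ Algebra.adjoin ℂ ({T} : Set (E →ₗ[ℂ] E)) := by
          rw [Algebra.adjoin_singleton_eq_range_aeval]; exact ⟨r, rfl⟩
        exact h1 h2
      have hRA : R ∈ A := hRTS ▸ mul_mem hTA hSA
      have hPjR : P j * R = R := by rw [hRTS, ← mul_assoc, hPjT]
      have hRPj : R * P j = R := by rw [hRST, mul_assoc, hTPj]
      have hRY : R * Y = 0 := by rw [hRST, mul_assoc, hTY, mul_zero]
      have hRneP : R ≠ P j := by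
        intro h
        apply hYne
        rw [← hPjY, ← h]
        exact hRY
      have hPmR0 : P j - R ≠ 0 := sub_ne_zero.mpr (Ne.symm hRneP)
      have hstarPmR : star (P j - R) = P j - R := by rw [star_sub, hstar j, hRstar]
      have hRPl : ∀ l, l ≠ j → R * P l = 0 := by
        intro l hl
        rw [← hRPj, mul_assoc, hmul j l, if_neg (Ne.symm hl), mul_zero]
      have hPlR : ∀ l, l ≠ j → P l * R = 0 := by
        intro l hl
        rw [← hPjR, ← mul_assoc, hmul l j, if_neg hl, zero_mul]
      set Q : Fin (p + 1) → (E →ₗ[ℂ] E) := Fin.snoc (Function.update P j R) (P j - R) with hQ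
      have hQlast : Q (Fin.last p) = P j - R := Fin.snoc_last _ _
      have hQcast : ∀ l : Fin p, Q (Fin.castSucc l) = if l = j then R else P l := by
        intro l; rw [hQ, Fin.snoc_castSucc, Function.update_apply]
      have hQj : Q (Fin.castSucc j) = R := by rw [hQcast, if_pos rfl]
      have hQfam : IsOrthProjFamily A Q := by
        refine ⟨?_, ?_, ?_, ?_⟩
        · intro l
          induction l using Fin.lastCases with
          | last => rw [hQlast]; exact sub_mem (hmem j) hRA
          | cast l => rw [hQcast]; split; exacts [hRA, hmem l]
        · intro l
          induction l using Fin.lastCases with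
          | last => rw [hQlast]; exact hPmR0
          | cast l => rw [hQcast]; split; exacts [hR0, hne l]
        · intro l
          induction l using Fin.lastCases with
          | last => rw [hQlast]; exact hstarPmR
          | cast l => rw [hQcast]; split; exacts [hRstar, hstar l]
        · intro a b
          induction a using Fin.lastCases with
          | last =>
            induction b using Fin.lastCases with
            | last =>
              rw [if_pos rfl, hQlast, mul_sub, sub_mul, sub_mul, hPjj, hPjR, hRPj, hRidem,
                sub_self, sub_zero]
            | cast b =>
              have hne' : Fin.last p ≠ Fin.castSucc b := (Fin.castSucc_lt_last b).ne'
              rw [if_neg hne', hQlast, hQcast]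
              by_cases hbj : b = j
              · rw [if_pos hbj, sub_mul, hPjR, hRidem, sub_self]
              · rw [if_neg hbj, sub_mul, hmul j b, if_neg (Ne.symm hbj), hRPl b hbj, sub_self]
          | cast a =>
            induction b using Fin.lastCases with
            | last =>
              have hne' : Fin.castSucc a ≠ Fin.last p := (Fin.castSucc_lt_last a).ne
              rw [if_neg hne', hQlast, hQcast]
              by_cases haj : a = j
              · rw [if_pos haj, mul_sub, hRPj, hRidem, sub_self]
              · rw [if_neg haj, mul_sub, hmul a j, if_neg haj, hPlR a haj, sub_self]
            | cast b =>
              rw [hQcast, hQcast]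
              by_cases hab : a = b
              · subst hab
                rw [if_pos rfl]
                by_cases haj : a = j
                · rw [if_pos haj, hRidem]
                · rw [if_neg haj, hmul a a, if_pos rfl]
              · rw [if_neg (fun h => hab (Fin.castSucc_injective _ h))]
                by_cases haj : a = j
                · have hbj : b ≠ j := fun h => hab (haj.trans h.symm)
                  rw [if_pos haj, if_neg hbj, hRPl b hbj]
                · rw [if_neg haj]
                  by_cases hbj : b = j
                  · rw [if_pos hbj, hPlR a haj]
                  · rw [if_neg hbj, hmul a b, if_neg hab]
      have hRin : R ∈ Algebra.adjoin ℂ (Set.range Q) := by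
        have h1 := Algebra.subset_adjoin (R := ℂ) (Set.mem_range_self (f := Q) (Fin.castSucc j))
        rwa [hQj] at h1
      have hle : Algebra.adjoin ℂ (Set.range P) ≤ Algebra.adjoin ℂ (Set.range Q) := by
        apply Algebra.adjoin_le
        rintro x ⟨l, rfl⟩
        by_cases hlj : l = j
        · subst hlj
          have h2 : (P l - R) ∈ Algebra.adjoin ℂ (Set.range Q) := by
            have h3 := Algebra.subset_adjoin (R := ℂ) (Set.mem_range_self (f := Q) (Fin.last p))
            rwa [hQlast] at h3
          have h3 := add_mem hRin h2
          rwa [add_sub_cancel] at h3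
        · have h2 := Algebra.subset_adjoin (R := ℂ) (Set.mem_range_self (f := Q) (Fin.castSucc l))
          rw [hQcast, if_neg hlj] at h2
          exact h2
      have hspan : ∀ x ∈ Algebra.adjoin ℂ (Set.range P), x ∈ Submodule.span ℂ (Set.range P) := by
        have hone : (1 : E →ₗ[ℂ] E) ∈ Submodule.span ℂ (Set.range P) := by
          rw [← hsum]
          exact Submodule.sum_mem _ fun l _ => Submodule.subset_span ⟨l, rfl⟩
        have hmulmem : ∀ a b : E →ₗ[ℂ] E, a ∈ Submodule.span ℂ (Set.range P) →
            b ∈ Submodule.span ℂ (Set.range P) → a * b ∈ Submodule.span ℂ (Set.range P) := by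
          intro a b ha hb
          obtain ⟨c, hc⟩ := (Submodule.mem_span_range_iff_exists_fun ℂ).mp ha
          obtain ⟨d, hd⟩ := (Submodule.mem_span_range_iff_exists_fun ℂ).mp hb
          rw [← hc, ← hd, Finset.sum_mul_sum]
          refine Submodule.sum_mem _ fun l _ => Submodule.sum_mem _ fun m _ => ?_
          rw [smul_mul_smul_comm, hmul l m]
          by_cases hlm : l = m
          · rw [if_pos hlm]
            exact Submodule.smul_mem _ _ (Submodule.subset_span ⟨l, rfl⟩)
          · rw [if_neg hlm, smul_zero]
            exact zero_mem _
        intro x hx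
        have hle2 : Algebra.adjoin ℂ (Set.range P) ≤
            Submodule.toSubalgebra (Submodule.span ℂ (Set.range P)) hone hmulmem :=
          Algebra.adjoin_le Submodule.subset_span
        exact hle2 hx
      have hRnotin : R ∉ Algebra.adjoin ℂ (Set.range P) := by
        intro hmemR
        obtain ⟨c, hc⟩ := (Submodule.mem_span_range_iff_exists_fun ℂ).mp (hspan R hmemR)
        have hRc : R = c j • P j := by
          have h1 : R = P j * R * P j := by rw [hPjR, hRPj]
          rw [h1, ← hc]
          rw [Finset.mul_sum, Finset.sum_mul]
          rw [Finset.sum_eq_single j]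
          · rw [mul_smul_comm, smul_mul_assoc, hPjj, hPjj]
          · intro l _ hlj
            rw [mul_smul_comm, smul_mul_assoc, hmul j l, if_neg (Ne.symm hlj), zero_mul,
              smul_zero]
          · intro h; exact absurd (Finset.mem_univ j) h
        have hcj : c j * c j = c j := by
          have h2 := hRidem
          rw [hRc, smul_mul_smul_comm, hPjj] at h2
          have h3 : (c j * c j - c j) • P j = 0 := by rw [sub_smul, h2, sub_self]
          rcases smul_eq_zero.mp h3 with h | h
          · exact sub_eq_zero.mp h
          · exact absurd h (hne j)
        have h4 : c j * (c j - 1) = 0 := by ring_nf; linear_combination hcj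
        rcases mul_eq_zero.mp h4 with h | h
        · exact hR0 (by rw [hRc, h, zero_smul])
        · exact hRneP (by rw [hRc, sub_eq_zero.mp h, one_smul])
      exact hmax (p + 1) Q hQfam
        (lt_of_le_of_ne hle fun h => hRnotin (by rw [h]; exact hRin))
    · exact ⟨M * (P j * N), mul_mem hM (mul_mem (hmem j) hN), hXY⟩
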